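/- arXiv:1703.01658 — 2 statements merged into one kernel-verified Lean document; each statement's English description precedes it below -/
import Mathlib

section
/- Let a < b be real numbers, let n ≥ 1, and let X_1, …, X_n be i.i.d. random variables with the uniform distribution on [a,b]. Then the expected range satisfies E[max_{1≤i≤n} X_i − min_{1≤i≤n} X_i] = ((n−1)/(n+1))·(b−a). Formally, the integral of the function x ↦ (⨆_{i} x_i) − (⨅_{i} x_i) over [a,b]^n with respect to the n-fold product of the uniform measure on [a,b] equals ((n−1)/(n+1))·(b−a). -/
open MeasureTheory Set

lemma aux1 (L : ℝ) (hL : 0 < L) (n : ℕ) :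
    ∫ t in Ioi (0:ℝ), ENNReal.toReal (1 - ENNReal.ofReal (min t L / L) ^ n) =
      L - L / (n + 1) := by
  have hcongr : ∀ t ∈ Ioi (0:ℝ),
      ENNReal.toReal (1 - ENNReal.ofReal (min t L / L) ^ n) =
        (Ioc (0:ℝ) L).indicator (fun t => 1 - (t / L) ^ n) t := by
    intro t ht
    have ht0 : 0 < t := ht
    have hr0 : 0 ≤ min t L / L := div_nonneg (le_min ht0.le hL.le) hL.le
    have hr1 : min t L / L ≤ 1 := by
      rw [div_le_one hL]; exact min_le_right _ _
    rw [← ENNReal.ofReal_pow hr0, ← ENNReal.ofReal_one,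
      ← ENNReal.ofReal_sub _ (pow_nonneg hr0 n),
      ENNReal.toReal_ofReal (sub_nonneg.2 (pow_le_one₀ hr0 hr1))]
    by_cases h : t ≤ L
    · rw [indicator_of_mem (mem_Ioc.2 ⟨ht0, h⟩) _, min_eq_left h]
    · rw [indicator_of_notMem (fun hm => h (mem_Ioc.1 hm).2) _,
        min_eq_right (le_of_not_ge h), div_self hL.ne']
      simp
  rw [setIntegral_congr_fun measurableSet_Ioi hcongr,
    setIntegral_indicator measurableSet_Ioc]
  have : Ioi (0:ℝ) ∩ Ioc 0 L = Ioc 0 L := inter_eq_self_of_subset_right Ioc_subset_Ioi_self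
  rw [this, ← intervalIntegral.integral_of_le hL.le]
  have h1 : IntervalIntegrable (fun _ : ℝ => (1:ℝ)) volume 0 L := intervalIntegrable_const
  have h2 : IntervalIntegrable (fun t : ℝ => (t / L) ^ n) volume 0 L := by
    simp_rw [div_pow]
    exact (intervalIntegral.intervalIntegrable_pow n).div_const _
  rw [intervalIntegral.integral_sub h1 h2]
  simp_rw [div_pow]
  rw [intervalIntegral.integral_div, integral_pow]
  have hn1 : (n:ℝ) + 1 ≠ 0 := by positivity
  have hLn : L ^ n ≠ 0 := by positivity
  simp only [intervalIntegral.integral_const, smul_eq_mul, mul_one, sub_zero]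
  rw [zero_pow (by omega), sub_zero, pow_succ]
  field_simp

lemma uniform_prob {a b : ℝ} (hab : a < b) :
    IsProbabilityMeasure ((ENNReal.ofReal (b - a))⁻¹ • volume.restrict (Icc a b)) := by
  constructor
  rw [Measure.smul_apply, Measure.restrict_apply MeasurableSet.univ, univ_inter,
    Real.volume_Icc, smul_eq_mul,
    ENNReal.inv_mul_cancel (ENNReal.ofReal_pos.2 (sub_pos.2 hab)).ne' ENNReal.ofReal_ne_top]

lemma uniform_Iic {a b : ℝ} (hab : a < b) (t : ℝ) :
    ((ENNReal.ofReal (b - a))⁻¹ • volume.restrict (Icc a b)) (Iic (a + t)) =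
      ENNReal.ofReal (min t (b - a) / (b - a)) := by
  have hL : (0:ℝ) < b - a := sub_pos.2 hab
  rw [Measure.smul_apply, Measure.restrict_apply measurableSet_Iic, smul_eq_mul]
  have h1 : Iic (a + t) ∩ Icc a b = Icc a (min (a + t) b) := by
    ext x; simp only [mem_inter_iff, mem_Iic, mem_Icc, le_min_iff]; tauto
  have h2 : min (a + t) b - a = min t (b - a) := by
    cases le_total (a+t) b with
    | inl h => rw [min_eq_left h, min_eq_left (by linarith)]; ring
    | inr h => rw [min_eq_right h, min_eq_right (by linarith)]
  rw [h1, Real.volume_Icc, h2, ENNReal.ofReal_div_of_pos hL, div_eq_mul_inv, mul_comm]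

lemma uniform_Ici {a b : ℝ} (hab : a < b) (t : ℝ) :
    ((ENNReal.ofReal (b - a))⁻¹ • volume.restrict (Icc a b)) (Ici (b - t)) =
      ENNReal.ofReal (min t (b - a) / (b - a)) := by
  have hL : (0:ℝ) < b - a := sub_pos.2 hab
  rw [Measure.smul_apply, Measure.restrict_apply measurableSet_Ici, smul_eq_mul]
  have h1 : Ici (b - t) ∩ Icc a b = Icc (max (b - t) a) b := by
    ext x; simp only [mem_inter_iff, mem_Ici, mem_Icc, max_le_iff]; tauto
  have h2 : b - max (b - t) a = min t (b - a) := by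
    cases le_total (b-t) a with
    | inl h => rw [max_eq_right h, min_eq_right (by linarith)]
    | inr h => rw [max_eq_left h, min_eq_left (by linarith), sub_sub_cancel]
  rw [h1, Real.volume_Icc, h2, ENNReal.ofReal_div_of_pos hL, div_eq_mul_inv, mul_comm]

lemma exp_eq {α : Type*} [MeasurableSpace α] {ν : Measure α} {g : α → ℝ} {L : ℝ}
    (hL : 0 < L) (n : ℕ) (hint : Integrable g ν) (h0 : 0 ≤ᵐ[ν] g)
    (htail : ∀ t : ℝ, 0 < t →
      ν {x | t < g x} = 1 - ENNReal.ofReal (min t L / L) ^ n) :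
    ∫ x, g x ∂ν = L - L / (n + 1) := by
  rw [hint.integral_eq_integral_meas_lt h0,
    setIntegral_congr_fun measurableSet_Ioi (fun t ht => by rw [measureReal_def, htail t ht])]
  exact aux1 L hL n

lemma tail_sup {a b : ℝ} (hab : a < b) {n : ℕ} (hn : 1 ≤ n) (t : ℝ) :
    (Measure.pi fun _ : Fin n =>
        (ENNReal.ofReal (b - a))⁻¹ • volume.restrict (Icc a b))
      {x | t < (⨆ i, x i) - a} =
      1 - ENNReal.ofReal (min t (b - a) / (b - a)) ^ n := by
  haveI : Nonempty (Fin n) := ⟨⟨0, by omega⟩⟩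
  haveI := uniform_prob hab
  have hset : {x : Fin n → ℝ | t < (⨆ i, x i) - a} =
      (univ.pi fun _ : Fin n => Iic (a + t))ᶜ := by
    ext x
    simp only [mem_setOf_eq, mem_compl_iff, mem_pi, mem_univ, true_implies, mem_Iic]
    rw [lt_sub_iff_add_lt', ← not_le, ciSup_le_iff (Set.finite_range x).bddAbove]
  rw [hset, prob_compl_eq_one_sub (MeasurableSet.univ_pi fun _ => measurableSet_Iic),
    Measure.pi_pi]
  simp [uniform_Iic hab t]

lemma tail_inf {a b : ℝ} (hab : a < b) {n : ℕ} (hn : 1 ≤ n) (t : ℝ) :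
    (Measure.pi fun _ : Fin n =>
        (ENNReal.ofReal (b - a))⁻¹ • volume.restrict (Icc a b))
      {x | t < b - ⨅ i, x i} =
      1 - ENNReal.ofReal (min t (b - a) / (b - a)) ^ n := by
  haveI : Nonempty (Fin n) := ⟨⟨0, by omega⟩⟩
  haveI := uniform_prob hab
  have hset : {x : Fin n → ℝ | t < b - ⨅ i, x i} =
      (univ.pi fun _ : Fin n => Ici (b - t))ᶜ := by
    ext x
    simp only [mem_setOf_eq, mem_compl_iff, mem_pi, mem_univ, true_implies, mem_Ici]
    rw [lt_sub_comm, ← not_le, le_ciInf_iff (Set.finite_range x).bddBelow]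
  rw [hset, prob_compl_eq_one_sub (MeasurableSet.univ_pi fun _ => measurableSet_Ici),
    Measure.pi_pi]
  simp [uniform_Ici hab t]

/-- The expected range of `n` i.i.d. uniform random variables on `[a,b]` equals
`((n-1)/(n+1)) * (b-a)`. -/
theorem expected_range_uniform (a b : ℝ) (hab : a < b) (n : ℕ) (hn : 1 ≤ n) :
    ∫ x : Fin n → ℝ,
        ((⨆ i, x i) - ⨅ i, x i)
        ∂(Measure.pi fun _ : Fin n =>
            (ENNReal.ofReal (b - a))⁻¹ • volume.restrict (Set.Icc a b)) =
      ((n : ℝ) - 1) / ((n : ℝ) + 1) * (b - a) := by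
  haveI : Nonempty (Fin n) := ⟨⟨0, by omega⟩⟩
  haveI := uniform_prob hab
  set μ := (ENNReal.ofReal (b - a))⁻¹ • volume.restrict (Icc a b) with hμ
  set ν := Measure.pi fun _ : Fin n => μ with hν
  haveI : IsProbabilityMeasure ν := by infer_instance
  have hL : (0:ℝ) < b - a := sub_pos.2 hab
  have msup : Measurable fun x : Fin n → ℝ => ⨆ i, x i :=
    Measurable.iSup fun i => measurable_pi_apply i
  have minf : Measurable fun x : Fin n → ℝ => ⨅ i, x i :=
    Measurable.iInf fun i => measurable_pi_apply i
  -- a.e. all coordinates lie in [a,b]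
  have hbox : ∀ᵐ x ∂ν, ∀ i, x i ∈ Icc a b := by
    have h1 : ν (univ.pi fun _ : Fin n => Icc a b) = 1 := by
      rw [hν, Measure.pi_pi]
      have : μ (Icc a b) = 1 := by
        rw [hμ, Measure.smul_apply, Measure.restrict_apply measurableSet_Icc, inter_self,
          Real.volume_Icc, smul_eq_mul,
          ENNReal.inv_mul_cancel (ENNReal.ofReal_pos.2 hL).ne' ENNReal.ofReal_ne_top]
      simp [this]
    have h2 : ν (univ.pi fun _ : Fin n => Icc a b)ᶜ = 0 := by
      rw [prob_compl_eq_one_sub (MeasurableSet.univ_pi fun _ => measurableSet_Icc), h1, tsub_self]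
    rw [ae_iff]
    convert h2 using 2
    ext x
    simp only [mem_setOf_eq, mem_compl_iff, mem_pi, mem_univ, true_implies]
  -- integrability
  have intsup : Integrable (fun x : Fin n → ℝ => ⨆ i, x i) ν := by
    refine Integrable.mono' (integrable_const (|a| + |b|)) msup.aestronglyMeasurable ?_
    filter_upwards [hbox] with x hx
    rw [Real.norm_eq_abs, abs_le]
    constructor
    · have h1 : a ≤ x ⟨0, by omega⟩ := (hx _).1
      have h2 := le_ciSup (Set.finite_range x).bddAbove (⟨0, by omega⟩ : Fin n)
      have := neg_abs_le a
      have := abs_nonneg b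
      linarith
    · have h1 : (⨆ i, x i) ≤ b := ciSup_le fun i => (hx i).2
      have := le_abs_self b
      have := abs_nonneg a
      linarith
  have intinf : Integrable (fun x : Fin n → ℝ => ⨅ i, x i) ν := by
    refine Integrable.mono' (integrable_const (|a| + |b|)) minf.aestronglyMeasurable ?_
    filter_upwards [hbox] with x hx
    rw [Real.norm_eq_abs, abs_le]
    constructor
    · have h1 : a ≤ ⨅ i, x i := le_ciInf fun i => (hx i).1
      have := neg_abs_le a
      have := abs_nonneg b
      linarith
    · have h1 : x ⟨0, by omega⟩ ≤ b := (hx _).2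
      have h2 := ciInf_le (Set.finite_range x).bddBelow (⟨0, by omega⟩ : Fin n)
      have := le_abs_self b
      have := abs_nonneg a
      linarith
  -- expected values
  have hsup : ∫ x, ((⨆ i, x i) - a) ∂ν = (b - a) - (b - a) / (n + 1) := by
    refine exp_eq hL n (intsup.sub (integrable_const a)) ?_ (fun t ht => tail_sup hab hn t)
    filter_upwards [hbox] with x hx
    have h1 : a ≤ x ⟨0, by omega⟩ := (hx _).1
    have h2 := le_ciSup (Set.finite_range x).bddAbove (⟨0, by omega⟩ : Fin n)
    simp only [Pi.zero_apply]
    linarith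
  have hinf : ∫ x, (b - ⨅ i, x i) ∂ν = (b - a) - (b - a) / (n + 1) := by
    refine exp_eq hL n ((integrable_const b).sub intinf) ?_ (fun t ht => tail_inf hab hn t)
    filter_upwards [hbox] with x hx
    have h1 : (⨅ i, x i) ≤ b := (ciInf_le (Set.finite_range x).bddBelow
      (⟨0, by omega⟩ : Fin n)).trans (hx _).2
    simp only [Pi.zero_apply]
    linarith
  rw [integral_sub intsup (integrable_const a), integral_const] at hsup
  rw [integral_sub (integrable_const b) intinf, integral_const] at hinf
  simp only [probReal_univ, one_smul] at hsup hinf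
  rw [integral_sub intsup intinf]
  have hn1 : (n:ℝ) + 1 ≠ 0 := by positivity
  have e1 : ∫ x, (⨆ i, x i) ∂ν = a + ((b - a) - (b - a) / (n + 1)) := by linarith
  have e2 : ∫ x, (⨅ i, x i) ∂ν = b - ((b - a) - (b - a) / (n + 1)) := by linarith
  rw [e1, e2]
  field_simp
  ring
end

section
/- Let r > 0 and let C ⊆ ℝ^d be a compact r-convex set. Then C fulfills the outside rolling ball condition: for every point y on the topological boundary ∂C of C there exists x ∈ ℝ^d with dist(x,y) = r (so that y lies on the boundary of the closed ball B(x,r)) and B∘(x,r) ∩ C = ∅. -/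
/-- A set `C ⊆ ℝ^d` is `r`-convex if it is the intersection of the complements of all
open Euclidean balls of radius `r` that are disjoint from `C`. -/
def RConvex {d : ℕ} (r : ℝ) (C : Set (EuclideanSpace ℝ (Fin d))) : Prop :=
  C = ⋂ x ∈ {x : EuclideanSpace ℝ (Fin d) | Metric.ball x r ∩ C = ∅}, (Metric.ball x r)ᶜ

/-- A compact `r`-convex set fulfills the outside rolling ball condition: every boundary
point `y ∈ ∂C` lies on the boundary of a closed ball `B(x,r)` whose open interior is
disjoint from `C`. -/
theorem rConvex_outside_rolling_ball {d : ℕ} (r : ℝ) (hr : 0 < r)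
    (C : Set (EuclideanSpace ℝ (Fin d))) (hcomp : IsCompact C) (hC : RConvex r C)
    (y : EuclideanSpace ℝ (Fin d)) (hy : y ∈ frontier C) :
    ∃ x : EuclideanSpace ℝ (Fin d), dist x y = r ∧ Metric.ball x r ∩ C = ∅ := by
  have hclosed : IsClosed C := hcomp.isClosed
  have hyC : y ∈ C := by
    rw [← hclosed.closure_eq]; exact hy.1
  -- key consequence of r-convexity
  have key : ∀ z, z ∉ C → ∃ x, dist z x < r ∧ Metric.ball x r ∩ C = ∅ := by
    intro z hz
    rw [hC] at hz
    simp only [Set.mem_iInter, Set.mem_compl_iff, Metric.mem_ball, not_forall, not_not] at hz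
    obtain ⟨x, hx1, hx2⟩ := hz
    exact ⟨x, hx2, hx1⟩
  -- pick zₙ ∉ C with dist zₙ y small
  have hyc : y ∈ closure Cᶜ := by rw [closure_compl]; exact hy.2
  have hz : ∀ n : ℕ, ∃ z, z ∉ C ∧ dist z y < 1 / (n + 1) := by
    intro n
    have hpos : (0:ℝ) < 1 / (n + 1) := by positivity
    obtain ⟨z, hz1, hz2⟩ := Metric.mem_closure_iff.1 hyc _ hpos
    exact ⟨z, hz1, by rwa [dist_comm]⟩
  choose z hzC hzd using hz
  -- centers
  choose x hxz hxC using fun n => key (z n) (hzC n)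
  -- xₙ in a compact ball
  have hxball : ∀ n, x n ∈ Metric.closedBall y (r + 1) := by
    intro n
    rw [Metric.mem_closedBall]
    have h1 : dist (x n) y ≤ dist (x n) (z n) + dist (z n) y := dist_triangle _ _ _
    have h2 : dist (x n) (z n) < r := by rw [dist_comm]; exact hxz n
    have h3 : dist (z n) y < 1 / (n + 1) := hzd n
    have h4 : (1:ℝ) / (n + 1) ≤ 1 := by
      rw [div_le_one (by positivity)]
      linarith [Nat.cast_nonneg (α := ℝ) n]
    linarith
  obtain ⟨x₀, hx₀mem, φ, hφmono, hφtend⟩ :=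
    (isCompact_closedBall y (r + 1)).tendsto_subseq hxball
  refine ⟨x₀, ?_, ?_⟩
  · -- dist x₀ y = r
    have hdtend : Filter.Tendsto (fun n => dist (x (φ n)) y) Filter.atTop (nhds (dist x₀ y)) :=
      (Filter.Tendsto.dist hφtend tendsto_const_nhds)
    have hge : r ≤ dist x₀ y := by
      refine ge_of_tendsto hdtend (Filter.Eventually.of_forall fun n => ?_)
      by_contra h
      push_neg at h
      have : y ∈ Metric.ball (x (φ n)) r ∩ C :=
        ⟨by rwa [Metric.mem_ball, dist_comm], hyC⟩
      rw [hxC (φ n)] at this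
      exact this
    have hle : dist x₀ y ≤ r := by
      have h0 : Filter.Tendsto (fun n : ℕ => r + 1 / ((φ n : ℝ) + 1))
          Filter.atTop (nhds (r + 0)) := by
        refine Filter.Tendsto.add tendsto_const_nhds ?_
        exact tendsto_one_div_add_atTop_nhds_zero_nat.comp
          (StrictMono.tendsto_atTop hφmono)
      refine le_of_tendsto_of_tendsto' hdtend (by simpa using h0) fun n => ?_
      have h1 : dist (x (φ n)) y ≤ dist (x (φ n)) (z (φ n)) + dist (z (φ n)) y :=
        dist_triangle _ _ _
      have h2 : dist (x (φ n)) (z (φ n)) < r := by rw [dist_comm]; exact hxz (φ n)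
      have h3 : dist (z (φ n)) y < 1 / ((φ n : ℝ) + 1) := hzd (φ n)
      rw [← one_div]
      linarith
    linarith
  · -- ball x₀ r ∩ C = ∅
    rw [Set.eq_empty_iff_forall_notMem]
    rintro c ⟨hc1, hc2⟩
    rw [Metric.mem_ball] at hc1
    have htend : Filter.Tendsto (fun n => dist c (x (φ n))) Filter.atTop (nhds (dist c x₀)) :=
      Filter.Tendsto.dist tendsto_const_nhds hφtend
    have : ∀ᶠ n in Filter.atTop, dist c (x (φ n)) < r :=
      htend.eventually (Filter.Tendsto.eventually_lt_const hc1 Filter.tendsto_id)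
    obtain ⟨n, hn⟩ := this.exists
    have : c ∈ Metric.ball (x (φ n)) r ∩ C := ⟨Metric.mem_ball.2 hn, hc2⟩
    rw [hxC (φ n)] at this
    exact this
end
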